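/- Let p : Fin N → Fin N be a parent function defining a rooted forest on Fin N (for every x there exists n with p^(n+1)(x) = p^n(x)). Define the Cole–Vishkin update on colorings c : Fin N → ℕ by: if p(x) ≠ x, c'(x) = 2·k(x) + b(x) where k(x) is the least index at which the binary digits of c(x) and c(p(x)) differ and b(x) is the k(x)-th binary digit of c(x); if p(x) = x, c'(x) is the 0-th binary digit of c(x). Starting from the coloring c₀(x) = x (as a natural number), there exists J such that the J-th iterate c_J of the update applied to c₀ is a proper coloring of the forest (c_J(x) ≠ c_J(p(x)) whenever p(x) ≠ x) taking values in {0, 1, 2, 3, 4, 5}, i.e., using at most 6 colors. -/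

import Mathlib

/-- The least bit position at which the binary expansions of `n` and `m` differ
(`0` if `n = m`). -/
def cvDiffBit (n m : ℕ) : ℕ :=
  if h : n = m then 0
  else Nat.find (p := fun k => n.testBit k ≠ m.testBit k)
    (by
      by_contra hc
      push_neg at hc
      exact h (Nat.eq_of_testBit_eq fun i => hc i))

/-- The Cole–Vishkin update of a coloring `c` of the rooted forest with parent
function `p`: a non-root `x` gets the new color `2 * k + b` where `k` is the least bit
at which `c x` and `c (p x)` differ and `b` is the `k`-th bit of `c x`; a root gets the
`0`-th bit of its color. -/
def cvUpdate {N : ℕ} (p : Fin N → Fin N) (c : Fin N → ℕ) : Fin N → ℕ := fun x =>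
  if p x = x then (if (c x).testBit 0 then 1 else 0)
  else 2 * cvDiffBit (c x) (c (p x)) +
    (if (c x).testBit (cvDiffBit (c x) (c (p x))) then 1 else 0)

lemma cvDiffBit_spec {n m : ℕ} (h : n ≠ m) :
    n.testBit (cvDiffBit n m) ≠ m.testBit (cvDiffBit n m) := by
  unfold cvDiffBit
  rw [dif_neg h]
  exact Nat.find_spec (p := fun k => n.testBit k ≠ m.testBit k) _

lemma cvDiffBit_lt {n m b : ℕ} (hb : 0 < b) (hn : n < 2 ^ b) (hm : m < 2 ^ b) :
    cvDiffBit n m < b := by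
  unfold cvDiffBit
  split
  · exact hb
  · rename_i h
    rw [Nat.find_lt_iff]
    by_contra hc
    push_neg at hc
    apply h
    apply Nat.eq_of_testBit_eq
    intro i
    by_cases hi : i < b
    · exact hc i hi
    · push_neg at hi
      rw [Nat.testBit_eq_false_of_lt (lt_of_lt_of_le hn (Nat.pow_le_pow_right (by norm_num) hi)),
        Nat.testBit_eq_false_of_lt (lt_of_lt_of_le hm (Nat.pow_le_pow_right (by norm_num) hi))]

lemma cvProper_update {N : ℕ} (p : Fin N → Fin N) (c : Fin N → ℕ)
    (hc : ∀ x, p x ≠ x → c x ≠ c (p x)) :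
    ∀ x, p x ≠ x → cvUpdate p c x ≠ cvUpdate p c (p x) := by
  intro x hx
  have hne : c x ≠ c (p x) := hc x hx
  have hspec := cvDiffBit_spec hne
  unfold cvUpdate
  rw [if_neg hx]
  by_cases hr : p (p x) = p x
  · rw [if_pos hr]
    intro heq
    rcases Nat.eq_zero_or_pos (cvDiffBit (c x) (c (p x))) with hk0 | hk0
    · rw [hk0] at heq hspec
      split_ifs at heq <;> simp_all
    · split_ifs at heq <;> omega
  · rw [if_neg hr]
    intro heq
    have hk : cvDiffBit (c x) (c (p x)) = cvDiffBit (c (p x)) (c (p (p x))) := by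
      split_ifs at heq <;> omega
    rw [hk] at hspec heq
    split_ifs at heq <;> simp_all

lemma cvUpdate_lt {N : ℕ} (p : Fin N → Fin N) (c : Fin N → ℕ) {b : ℕ}
    (hb : 0 < b) (h : ∀ x, c x < 2 ^ b) : ∀ x, cvUpdate p c x < 2 * b := by
  intro x
  unfold cvUpdate
  split
  · split_ifs <;> omega
  · have := cvDiffBit_lt hb (h x) (h (p x))
    split_ifs <;> omega

lemma cv_key {N : ℕ} (p : Fin N → Fin N) :
    ∀ b : ℕ, ∀ c : Fin N → ℕ, (∀ x, c x < 2 ^ b) →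
    (∀ x, p x ≠ x → c x ≠ c (p x)) →
    ∃ J, (∀ x, p x ≠ x → (cvUpdate p)^[J] c x ≠ (cvUpdate p)^[J] c (p x)) ∧
      (∀ x, (cvUpdate p)^[J] c x < 8) := by
  intro b
  induction b using Nat.strong_induction_on with
  | _ b ih =>
    intro c hbound hprop
    by_cases hb : b ≤ 3
    · refine ⟨0, hprop, fun x => lt_of_lt_of_le (hbound x) ?_⟩
      calc 2 ^ b ≤ 2 ^ 3 := Nat.pow_le_pow_right (by norm_num) hb
        _ = 8 := by norm_num
    · push_neg at hb
      have h2b : 2 * b ≤ 2 ^ (b - 1) := by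
        clear ih hprop hbound c
        induction b with
        | zero => omega
        | succ n ihn =>
          rcases Nat.lt_or_ge n 4 with h | h
          · interval_cases n <;> first | omega | norm_num
          · have h1 := ihn (by omega)
            have h2 : 2 ^ (n - 1) * 2 = 2 ^ (n + 1 - 1) := by
              rw [← pow_succ]
              congr 1
              omega
            omega
      have hbound' : ∀ x, cvUpdate p c x < 2 ^ (b - 1) := fun x =>
        lt_of_lt_of_le (cvUpdate_lt p c (by omega) hbound x) h2b
      obtain ⟨J, hJp, hJb⟩ := ih (b - 1) (by omega) (cvUpdate p c) hbound'
        (cvProper_update p c hprop)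
      refine ⟨J + 1, ?_, ?_⟩
      · intro x hx
        rw [Function.iterate_succ_apply]
        exact hJp x hx
      · intro x
        rw [Function.iterate_succ_apply]
        exact hJb x

/-- **Cole–Vishkin six-coloring.** For a rooted forest on `Fin N` given
by a parent function `p`, some iterate of the Cole–Vishkin update, starting from the
coloring `c₀ x = x`, is a proper coloring using at most `6` colors `{0, …, 5}`. -/
theorem cole_vishkin_six_coloring {N : ℕ} (p : Fin N → Fin N)
    (hforest : ∀ x : Fin N, ∃ n : ℕ, p^[n + 1] x = p^[n] x) :
    ∃ J : ℕ,
      (∀ x : Fin N, p x ≠ x →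
        (cvUpdate p)^[J] (fun v => (v : ℕ)) x ≠ (cvUpdate p)^[J] (fun v => (v : ℕ)) (p x)) ∧
      (∀ x : Fin N, (cvUpdate p)^[J] (fun v => (v : ℕ)) x < 6) := by
  obtain ⟨J, hJp, hJb⟩ := cv_key p N (fun v => (v : ℕ))
    (fun x => lt_trans x.isLt (Nat.lt_two_pow_self (n := N)))
    (fun x hx h => hx (Fin.val_injective h.symm))
  refine ⟨J + 1, ?_, ?_⟩
  · intro x hx
    rw [Function.iterate_succ_apply']
    exact cvProper_update p _ hJp x hx
  · intro x
    rw [Function.iterate_succ_apply']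
    have h8 : ∀ y, (cvUpdate p)^[J] (fun v => (v : ℕ)) y < 2 ^ 3 := by
      simpa using hJb
    have hk := cvDiffBit_lt (b := 3) (by norm_num) (h8 x) (h8 (p x))
    simp only [cvUpdate]
    split_ifs <;> omega
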